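/- Let a : [0,∞) → [0,∞) be continuous and strictly increasing with a(0) = 0, and suppose there exist q > 0 and δ > 0 such that a(s) ≥ s^q for all s ∈ [0, δ]. Let k > 0, let n ≥ 2 be an integer, and let c = a(s₀) for some s₀ > 0. Then the function t ↦ a⁻¹(c · cosh(kt)^{1−n}) is Lebesgue integrable on [0, ∞), where a⁻¹ denotes the inverse function of a defined on the range of a. -/

import Mathlib

open MeasureTheory Real Set Filter

/-- Integrability of `t ↦ a⁻¹ (c · cosh(kt)^(1-n))` on `[0,∞)`, where `a⁻¹`
(here called `b`) is the inverse of the continuous strictly increasing function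
`a : [0,∞) → [0,∞)` with `a 0 = 0` and `a s ≥ s ^ q` on `[0, δ]`, and `c = a s₀`. -/
theorem stmt_3 (a : ℝ → ℝ)
    (ha_cont : ContinuousOn a (Set.Ici 0))
    (ha_mono : StrictMonoOn a (Set.Ici 0))
    (ha0 : a 0 = 0)
    (ha_nonneg : ∀ s : ℝ, 0 ≤ s → 0 ≤ a s)
    (q δ : ℝ) (hq : 0 < q) (hδ : 0 < δ)
    (ha3 : ∀ s ∈ Set.Icc (0 : ℝ) δ, s ^ q ≤ a s)
    (k : ℝ) (hk : 0 < k) (n : ℕ) (hn : 2 ≤ n)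
    (s₀ c : ℝ) (hs₀ : 0 < s₀) (hc : c = a s₀)
    (b : ℝ → ℝ) (hb : ∀ s : ℝ, 0 ≤ s → b (a s) = s) :
    MeasureTheory.IntegrableOn
      (fun t : ℝ => b (c * Real.cosh (k * t) ^ (1 - (n : ℤ)))) (Set.Ici 0) := by
  have hc0 : 0 < c := by
    rw [hc, ← ha0]
    exact ha_mono Set.self_mem_Ici (Set.mem_Ici.mpr hs₀.le) hs₀
  have hn2 : (2 : ℝ) ≤ n := by exact_mod_cast hn
  set e : ℝ := 1 - (n : ℝ) with he_def
  have he : e ≤ 0 := by simp [he_def]; linarith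
  have hzr : ∀ t : ℝ, Real.cosh (k * t) ^ (1 - (n : ℤ)) = Real.cosh (k * t) ^ e := by
    intro t
    rw [he_def, show (1 : ℝ) - (n : ℝ) = ((1 - (n : ℤ) : ℤ) : ℝ) by push_cast; ring,
      Real.rpow_intCast]
  set v : ℝ → ℝ := fun t => c * Real.cosh (k * t) ^ e with hv_def
  have hv_pos : ∀ t, 0 < v t := fun t =>
    mul_pos hc0 (Real.rpow_pos_of_pos (Real.cosh_pos _) e)
  have hv_le_c : ∀ t, v t ≤ c := by
    intro t
    have h1 : Real.cosh (k * t) ^ e ≤ 1 :=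
      Real.rpow_le_one_of_one_le_of_nonpos (Real.one_le_cosh _) he
    calc v t ≤ c * 1 := mul_le_mul_of_nonneg_left h1 hc0.le
    _ = c := mul_one c
  have hex : ∀ t : ℝ, ∃ s ∈ Set.Icc (0:ℝ) s₀, a s = v t := by
    intro t
    have hsub : Set.Icc (0:ℝ) s₀ ⊆ Set.Ici 0 := Set.Icc_subset_Ici_self
    have h1 : v t ∈ Set.Icc (a 0) (a s₀) := by
      rw [ha0, ← hc]; exact ⟨(hv_pos t).le, hv_le_c t⟩
    obtain ⟨s, hs, hfs⟩ := intermediate_value_Icc hs₀.le (ha_cont.mono hsub) h1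
    exact ⟨s, hs, hfs⟩
  choose σ hσ hσa using hex
  have hσ0 : ∀ t, 0 ≤ σ t := fun t => (hσ t).1
  have hfeq : ∀ t : ℝ, b (c * Real.cosh (k * t) ^ (1 - (n : ℤ))) = σ t := by
    intro t
    rw [hzr t, show c * Real.cosh (k * t) ^ e = v t from rfl, ← hσa t, hb _ (hσ0 t)]
  have hv_anti : ∀ ⦃t₁ t₂ : ℝ⦄, 0 ≤ t₁ → t₁ ≤ t₂ → v t₂ ≤ v t₁ := by
    intro t₁ t₂ ht₁ h12
    have hch : Real.cosh (k * t₁) ≤ Real.cosh (k * t₂) := by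
      rw [Real.cosh_le_cosh]
      rw [abs_of_nonneg (by positivity), abs_of_nonneg (by nlinarith)]
      nlinarith
    have := Real.rpow_le_rpow_of_nonpos (Real.cosh_pos _) hch he
    exact mul_le_mul_of_nonneg_left this hc0.le
  have hσ_anti : AntitoneOn σ (Set.Ici 0) := by
    intro t₁ ht₁ t₂ ht₂ h12
    have hva : a (σ t₂) ≤ a (σ t₁) := by rw [hσa, hσa]; exact hv_anti ht₁ h12
    exact (ha_mono.le_iff_le (Set.mem_Ici.mpr (hσ0 t₂)) (Set.mem_Ici.mpr (hσ0 t₁))).mp hva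
  set m : ℝ := k * ((n : ℝ) - 1) with hm_def
  have hm_pos : 0 < m := by apply mul_pos hk; linarith
  set A : ℝ := c * 2 ^ (-e) with hA_def
  have hA_pos : 0 < A := mul_pos hc0 (Real.rpow_pos_of_pos two_pos _)
  have hexp_rpow : ∀ x y : ℝ, Real.exp x ^ y = Real.exp (x * y) := by
    intro x y
    rw [Real.rpow_def_of_pos (Real.exp_pos _), Real.log_exp]
  have hvA : ∀ t : ℝ, v t ≤ A * Real.exp (-m * t) := by
    intro t
    have hexp : Real.exp (k * t) / 2 ≤ Real.cosh (k * t) := by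
      rw [Real.cosh_eq]
      have := (Real.exp_pos (-(k * t))).le
      linarith
    have h1 : Real.cosh (k * t) ^ e ≤ (Real.exp (k * t) / 2) ^ e :=
      Real.rpow_le_rpow_of_nonpos (by positivity) hexp he
    have h2 : (Real.exp (k * t) / 2) ^ e = Real.exp (k * t * e) * 2 ^ (-e) := by
      rw [Real.div_rpow (Real.exp_pos _).le two_pos.le, hexp_rpow, div_eq_mul_inv,
        ← Real.rpow_neg two_pos.le]
    have h3 : k * t * e = -m * t := by rw [he_def, hm_def]; ring
    calc v t ≤ c * ((Real.exp (k * t) / 2) ^ e) := mul_le_mul_of_nonneg_left h1 hc0.le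
      _ = A * Real.exp (-m * t) := by rw [h2, h3, hA_def]; ring
  have haδ : 0 < a δ := lt_of_lt_of_le (Real.rpow_pos_of_pos hδ q) (ha3 δ ⟨hδ.le, le_refl δ⟩)
  obtain ⟨T, hT⟩ : ∃ T : ℝ, ∀ t ≥ T, A * Real.exp (-m * t) ≤ a δ := by
    have h1 : Filter.Tendsto (fun t : ℝ => m * t) Filter.atTop Filter.atTop :=
      Filter.Tendsto.const_mul_atTop hm_pos Filter.tendsto_id
    have h2 := (Real.tendsto_exp_neg_atTop_nhds_zero.comp h1).const_mul A
    rw [mul_zero] at h2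
    have h3 : Filter.Tendsto (fun t : ℝ => A * Real.exp (-m * t)) Filter.atTop (nhds 0) := by
      refine h2.congr fun t => ?_
      simp [Function.comp, neg_mul]
    exact (h3.eventually (eventually_le_nhds haδ)).exists_forall_of_atTop
  set r : ℝ := m / q with hr_def
  have hr_pos : 0 < r := div_pos hm_pos hq
  set C : ℝ := A ^ (1 / q) with hC_def
  have hC_pos : 0 < C := Real.rpow_pos_of_pos hA_pos _
  set g : ℝ → ℝ := fun t => Set.indicator (Set.Icc 0 T) (fun _ => s₀) t + C * Real.exp (-r * t)
    with hg_def
  have hg_int : IntegrableOn g (Set.Ici 0) := by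
    apply MeasureTheory.Integrable.add
    · apply MeasureTheory.Integrable.integrableOn
      rw [MeasureTheory.integrable_indicator_iff measurableSet_Icc]
      exact (MeasureTheory.integrableOn_const_iff).mpr (Or.inr measure_Icc_lt_top)
    · have hI : IntegrableOn (fun t => C * Real.exp (-r * t)) (Set.Ici 0) := by
        rw [integrableOn_Ici_iff_integrableOn_Ioi]
        have := (exp_neg_integrableOn_Ioi 0 hr_pos).const_mul C
        simpa [neg_mul, IntegrableOn] using this
      exact hI
  have hmeas : AEStronglyMeasurable σ (volume.restrict (Set.Ici 0)) :=
    (aemeasurable_restrict_of_antitoneOn measurableSet_Ici hσ_anti).aestronglyMeasurable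
  have hbound : ∀ t ∈ Set.Ici (0:ℝ), ‖σ t‖ ≤ g t := by
    intro t ht
    rw [Real.norm_eq_abs, abs_of_nonneg (hσ0 t)]
    by_cases hle : t ≤ T
    · have h1 : Set.indicator (Set.Icc 0 T) (fun _ => s₀) t = s₀ :=
        Set.indicator_of_mem (Set.mem_Icc.mpr ⟨ht, hle⟩) _
      have h2 : 0 ≤ C * Real.exp (-r * t) := by positivity
      have := (hσ t).2
      rw [hg_def]; simp only [h1]; linarith
    · push_neg at hle
      have hvδ : v t ≤ a δ := le_trans (hvA t) (hT t hle.le)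
      have hσδ : σ t ≤ δ := by
        have : a (σ t) ≤ a δ := by rw [hσa]; exact hvδ
        exact (ha_mono.le_iff_le (Set.mem_Ici.mpr (hσ0 t)) (Set.mem_Ici.mpr hδ.le)).mp this
      have hpow : σ t ^ q ≤ v t := by
        rw [← hσa t]; exact ha3 (σ t) ⟨hσ0 t, hσδ⟩
      have hσv : σ t ≤ v t ^ (1 / q) := by
        have h1 := Real.rpow_le_rpow (Real.rpow_nonneg (hσ0 t) q) hpow
          (le_of_lt (one_div_pos.mpr hq))
        rwa [← Real.rpow_mul (hσ0 t), mul_one_div_cancel hq.ne',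
          Real.rpow_one] at h1
      have h2 : v t ^ (1 / q) ≤ (A * Real.exp (-m * t)) ^ (1 / q) :=
        Real.rpow_le_rpow (hv_pos t).le (hvA t) (le_of_lt (one_div_pos.mpr hq))
      have h3 : (A * Real.exp (-m * t)) ^ (1 / q) = C * Real.exp (-r * t) := by
        rw [Real.mul_rpow hA_pos.le (Real.exp_pos _).le, hexp_rpow, hC_def, hr_def]
        ring_nf
      have h4 : 0 ≤ Set.indicator (Set.Icc 0 T) (fun _ => s₀) t :=
        Set.indicator_nonneg (fun _ _ => hs₀.le) t
      rw [hg_def]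
      calc σ t ≤ v t ^ (1/q) := hσv
        _ ≤ (A * Real.exp (-m * t)) ^ (1/q) := h2
        _ = C * Real.exp (-r * t) := h3
        _ ≤ _ := by dsimp; linarith
  have := MeasureTheory.Integrable.mono' hg_int hmeas
    ((MeasureTheory.ae_restrict_iff' measurableSet_Ici).mpr (Filter.Eventually.of_forall hbound))
  exact this.congr (Filter.Eventually.of_forall fun t => (hfeq t).symm)
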